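/- For every integer n ≥ 3, Ξ_Δ(OP_n) = n − 3; that is, the maximum over all maximal outerplanar graphs G of order n of the minimum number of duplicated edges needed to make G triangle decomposable equals n − 3. -/

import Mathlib

/-- A triangle on three distinct vertices, as a multiset of edges. -/
def IsTriangle {V : Type*} (t : Multiset (Sym2 V)) : Prop :=
  ∃ a b c : V, a ≠ b ∧ b ≠ c ∧ a ≠ c ∧ t = {s(a, b), s(b, c), s(a, c)}

/-- A multigraph (multiset of edges) is triangle decomposable if it is a sum of triangles. -/
def TriDecomp {V : Type*} (E : Multiset (Sym2 V)) : Prop :=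
  ∃ T : Multiset (Multiset (Sym2 V)), (∀ t ∈ T, IsTriangle t) ∧ T.sum = E

/-- The edge multiset of a simple graph on a finite vertex type. -/
noncomputable def edgeMS {V : Type*} [Fintype V] (G : SimpleGraph V) : Multiset (Sym2 V) :=
  G.edgeSet.toFinite.toFinset.val

/-- `ε_Δ(G)`: the least number of duplicated edges of `G` (a multiset of edges of `G`,
repetitions allowed) whose addition makes the edge multiset triangle decomposable. -/
noncomputable def epsDelta {V : Type*} [Fintype V] (G : SimpleGraph V) : ℕ :=
  sInf {k | ∃ D : Multiset (Sym2 V), D.card = k ∧ (∀ e ∈ D, e ∈ G.edgeSet) ∧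
    TriDecomp (edgeMS G + D)}

/-- The edge set of the simple-clique 2-tree construction on `Fin n`: start with the
triangle on `0,1,2`, and each vertex `k ≥ 3` is attached to the two vertices `a k, b k`. -/
def mopEdges (n : ℕ) (hn : 3 ≤ n) (a b : Fin n → Fin n) : Set (Sym2 (Fin n)) :=
  {e | e = s(⟨0, by omega⟩, ⟨1, by omega⟩) ∨ e = s(⟨1, by omega⟩, ⟨2, by omega⟩) ∨
       e = s(⟨0, by omega⟩, ⟨2, by omega⟩) ∨
       ∃ k : Fin n, 3 ≤ (k : ℕ) ∧ (e = s(k, a k) ∨ e = s(k, b k))}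

/-- `G` is a maximal outerplanar graph (equivalently, a simple-clique 2-tree):
it is built from a triangle by repeatedly adding a new vertex adjacent to exactly the two
endpoints of an existing edge, each edge being used as an attachment edge at most once. -/
def IsMOP {n : ℕ} (G : SimpleGraph (Fin n)) : Prop :=
  ∃ (hn : 3 ≤ n) (a b : Fin n → Fin n),
    (∀ k : Fin n, 3 ≤ (k : ℕ) → (a k : ℕ) < k ∧ (b k : ℕ) < k ∧ a k ≠ b k) ∧
    (∀ k : Fin n, 3 ≤ (k : ℕ) → s(a k, b k) ∈ mopEdges n hn a b) ∧
    (∀ k l : Fin n, 3 ≤ (k : ℕ) → 3 ≤ (l : ℕ) → k ≠ l → s(a k, b k) ≠ s(a l, b l)) ∧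
    G = SimpleGraph.fromEdgeSet (mopEdges n hn a b)

/-- `ε_Δ(OP_n) = min { ε_Δ(G) : G a maximal outerplanar graph of order n }`. -/
noncomputable def epsOP (n : ℕ) : ℕ :=
  sInf {m | ∃ G : SimpleGraph (Fin n), IsMOP G ∧ epsDelta G = m}

/-- `Ξ_Δ(OP_n) = max { ε_Δ(G) : G a maximal outerplanar graph of order n }`. -/
noncomputable def xiOP (n : ℕ) : ℕ :=
  sSup {m | ∃ G : SimpleGraph (Fin n), IsMOP G ∧ epsDelta G = m}

/-! ### auxiliary lemmas -/

section Aux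
open Multiset

lemma msw1 {α : Type*} (x y z : α) : ({x, y, z} : Multiset α) = {y, x, z} :=
  Multiset.cons_swap x y {z}

lemma msw2 {α : Type*} (x y z : α) : ({x, y, z} : Multiset α) = {x, z, y} :=
  congrArg (x ::ₘ ·) (Multiset.cons_swap y z 0)

lemma msrot {α : Type*} (x y z : α) : ({x, y, z} : Multiset α) = {y, z, x} := by
  rw [msw1, msw2]

lemma msrot2 {α : Type*} (x y z : α) : ({x, y, z} : Multiset α) = {z, x, y} := by
  rw [msrot, msrot]

lemma msrev {α : Type*} (x y z : α) : ({x, y, z} : Multiset α) = {z, y, x} := by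
  rw [msrot, msw1]

lemma edgeMS_nodup {V : Type*} [Fintype V] (G : SimpleGraph V) : (edgeMS G).Nodup :=
  G.edgeSet.toFinite.toFinset.nodup

lemma mem_edgeMS {V : Type*} [Fintype V] (G : SimpleGraph V) (e : Sym2 V) :
    e ∈ edgeMS G ↔ e ∈ G.edgeSet := Set.Finite.mem_toFinset _

lemma edgeMS_eq {V : Type*} [Fintype V] (G : SimpleGraph V) (M : Multiset (Sym2 V))
    (h1 : M.Nodup) (h2 : ∀ e, e ∈ M ↔ e ∈ G.edgeSet) : edgeMS G = M := by
  refine Multiset.Nodup.ext (edgeMS_nodup G) h1 |>.2 fun e => ?_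
  rw [mem_edgeMS, h2]

lemma count_edgeMS {V : Type*} [Fintype V] [DecidableEq V] (G : SimpleGraph V) (e : Sym2 V)
    (he : e ∈ G.edgeSet) : (edgeMS G).count e = 1 :=
  le_antisymm (Multiset.nodup_iff_count_le_one.1 (edgeMS_nodup G) e)
    (Multiset.one_le_count_iff_mem.2 ((mem_edgeMS G e).2 he))

lemma count_eq_sum_map {α : Type*} [DecidableEq α] (s : Multiset α) (x : α) :
    s.count x = (s.map (fun y => if y = x then 1 else 0)).sum := by
  induction s using Multiset.induction with
  | empty => simp
  | cons a s ih =>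
    simp only [Multiset.count_cons, ih, Multiset.map_cons, Multiset.sum_cons]
    by_cases h : x = a <;> simp [h, eq_comm, add_comm]

lemma count_in_sum {α : Type*} [DecidableEq α] (T : Multiset (Multiset α)) (x : α) :
    T.sum.count x = (T.map (fun t => t.count x)).sum := by
  induction T using Multiset.induction with
  | empty => simp
  | cons a s ih => simp [ih]

lemma sum_count_le_card {α : Type*} [DecidableEq α] (s : Finset α) (D : Multiset α) :
    ∑ e ∈ s, D.count e ≤ Multiset.card D := by
  calc ∑ e ∈ s, D.count e ≤ ∑ e ∈ s ∪ D.toFinset, D.count e :=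
        Finset.sum_le_sum_of_subset Finset.subset_union_left
    _ = ∑ e ∈ D.toFinset, D.count e := by
        refine (Finset.sum_subset Finset.subset_union_right fun x _ hx => ?_).symm
        exact Multiset.count_eq_zero.2 (fun hm => hx (Multiset.mem_toFinset.2 hm))
    _ = Multiset.card D := Multiset.toFinset_sum_count_eq D

lemma filter_card_aux {n : ℕ} (hn : 3 ≤ n) :
    (Finset.univ.filter (fun k : Fin n => 3 ≤ (k : ℕ))).card = n - 3 := by
  have : (Finset.univ.filter (fun k : Fin n => 3 ≤ (k : ℕ))) =
      (Finset.Ico 3 n).attachFin (fun m hm => (Finset.mem_Ico.1 hm).2) := by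
    ext k
    simp [Finset.mem_attachFin, Finset.mem_Ico, k.isLt]
  rw [this, Finset.card_attachFin, Nat.card_Ico]

lemma attach_edge_ne {n : ℕ} {k l c d : Fin n} (hc : (c : ℕ) < k) (hd : (d : ℕ) < l)
    (hkl : k ≠ l) : s(k, c) ≠ s(l, d) := by
  intro h
  rw [Sym2.eq_iff] at h
  rcases h with ⟨h1, h2⟩ | ⟨h1, h2⟩
  · exact hkl h1
  · have h1' := congrArg Fin.val h1
    have h2' := congrArg Fin.val h2
    omega

lemma base_ne {n : ℕ} {u v k c : Fin n} (hu : (u : ℕ) < 3) (hv : (v : ℕ) < 3)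
    (hk : 3 ≤ (k : ℕ)) : s(u, v) ≠ s(k, c) := by
  intro h
  rw [Sym2.eq_iff] at h
  rcases h with ⟨h1, h2⟩ | ⟨h1, h2⟩
  · have := congrArg Fin.val h1; omega
  · have := congrArg Fin.val h2; omega

end Aux

section UB

set_option maxHeartbeats 1000000 in
lemma mop_mem {n : ℕ} (hn : 3 ≤ n) (a b : Fin n → Fin n)
    (h1 : ∀ k : Fin n, 3 ≤ (k : ℕ) → (a k : ℕ) < k ∧ (b k : ℕ) < k ∧ a k ≠ b k)
    (h2 : ∀ k : Fin n, 3 ≤ (k : ℕ) → s(a k, b k) ∈ mopEdges n hn a b) :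
    (n - 3) ∈ {k | ∃ D : Multiset (Sym2 (Fin n)), D.card = k ∧
      (∀ e ∈ D, e ∈ (SimpleGraph.fromEdgeSet (mopEdges n hn a b)).edgeSet) ∧
      TriDecomp (edgeMS (SimpleGraph.fromEdgeSet (mopEdges n hn a b)) + D)} := by
  classical
  set G := SimpleGraph.fromEdgeSet (mopEdges n hn a b) with hG
  set v0 : Fin n := ⟨0, by omega⟩
  set v1 : Fin n := ⟨1, by omega⟩
  set v2 : Fin n := ⟨2, by omega⟩
  set K : Multiset (Fin n) := (Finset.univ.filter (fun k : Fin n => 3 ≤ (k : ℕ))).val with hK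
  have hKmem : ∀ k : Fin n, k ∈ K ↔ 3 ≤ (k : ℕ) := by
    intro k; simp [hK]
  have hKnd : K.Nodup := (Finset.univ.filter _).nodup
  -- every mop edge is non-diagonal
  have hnd : ∀ e ∈ mopEdges n hn a b, ¬ e.IsDiag := by
    rintro e (rfl | rfl | rfl | ⟨k, hk, rfl | rfl⟩) <;>
      simp only [Sym2.mk_isDiag_iff] <;> intro h <;> have := congrArg Fin.val h
    · simp [v0, v1] at this
    · simp [v1, v2] at this
    · simp [v0, v2] at this
    · have := (h1 k hk).1; omega
    · have := (h1 k hk).2.1; omega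
  have hES : ∀ e, e ∈ G.edgeSet ↔ e ∈ mopEdges n hn a b := by
    intro e
    rw [hG, SimpleGraph.edgeSet_fromEdgeSet, Set.mem_diff]
    exact ⟨fun h => h.1, fun h => ⟨h, hnd e h⟩⟩
  set base : Multiset (Sym2 (Fin n)) := {s(v0, v1), s(v1, v2), s(v0, v2)} with hbase
  set pair : Fin n → Multiset (Sym2 (Fin n)) := fun k => {s(k, a k), s(k, b k)} with hpair
  set M : Multiset (Sym2 (Fin n)) := base + K.bind pair with hM
  set D : Multiset (Sym2 (Fin n)) := K.map (fun k => s(a k, b k)) with hD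
  have hMnodup : M.Nodup := by
    rw [hM, Multiset.nodup_add]
    refine ⟨?_, ?_, ?_⟩
    · rw [hbase]
      simp only [Multiset.insert_eq_cons, Multiset.nodup_cons, Multiset.mem_cons,
        Multiset.mem_singleton, Multiset.nodup_singleton, and_true, not_or]
      refine ⟨⟨?_, ?_⟩, ?_⟩ <;>
        · intro h
          rw [Sym2.eq_iff] at h
          rcases h with ⟨ha, hb⟩ | ⟨ha, hb⟩ <;>
            (have h1 := congrArg Fin.val ha; have h2 := congrArg Fin.val hb;
             simp only [v0, v1, v2] at h1 h2; omega)
    · rw [Multiset.nodup_bind]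
      constructor
      · intro k hk
        rw [hKmem] at hk
        rw [hpair]
        simp only [Multiset.insert_eq_cons, Multiset.nodup_cons, Multiset.mem_singleton,
          Multiset.nodup_singleton, and_true]
        intro h
        exact (h1 k hk).2.2 (Sym2.congr_right.1 h)
      · refine hKnd.pairwise ?_
        intro k hk l hl hkl
        simp only [Function.onFun, hpair, Multiset.disjoint_left]
        simp only [Multiset.insert_eq_cons]
        rw [hKmem] at hk; rw [hKmem] at hl
        intro e he hf
        simp only [Multiset.mem_cons, Multiset.mem_singleton] at he hf
        have hak := (h1 k hk).1; have hbk := (h1 k hk).2.1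
        have hal := (h1 l hl).1; have hbl := (h1 l hl).2.1
        rcases he with rfl | rfl <;> rcases hf with hf | hf <;>
          exact absurd hf (attach_edge_ne (by omega) (by omega) hkl)
    · rw [Multiset.disjoint_left]
      intro e he hf
      rw [Multiset.mem_bind] at hf
      obtain ⟨k, hk, hf⟩ := hf
      rw [hKmem] at hk
      have hak := (h1 k hk).1; have hbk := (h1 k hk).2.1
      rw [hbase] at he
      simp only [Multiset.insert_eq_cons, Multiset.mem_cons, Multiset.mem_singleton] at he
      rw [hpair] at hf
      simp only [Multiset.insert_eq_cons, Multiset.mem_cons, Multiset.mem_singleton] at hf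
      have hv0 : (v0 : ℕ) < 3 := by simp [v0]
      have hv1 : (v1 : ℕ) < 3 := by simp [v1]
      have hv2 : (v2 : ℕ) < 3 := by simp [v2]
      rcases he with rfl | rfl | rfl <;> rcases hf with hf | hf <;>
        exact absurd hf (base_ne (by omega) (by omega) hk)
  have hMmem : ∀ e, e ∈ M ↔ e ∈ G.edgeSet := by
    intro e
    rw [hES]
    simp only [hM, Multiset.mem_add, Multiset.mem_bind, hbase, hpair,
      Multiset.insert_eq_cons, Multiset.mem_cons, Multiset.mem_singleton, hKmem,
      mopEdges, Set.mem_setOf_eq]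
    constructor
    · rintro ((h | h | h) | ⟨k, hk, h⟩)
      exacts [Or.inl h, Or.inr (Or.inl h), Or.inr (Or.inr (Or.inl h)),
        Or.inr (Or.inr (Or.inr ⟨k, hk, h⟩))]
    · rintro (h | h | h | ⟨k, hk, h⟩)
      exacts [Or.inl (Or.inl h), Or.inl (Or.inr (Or.inl h)), Or.inl (Or.inr (Or.inr h)),
        Or.inr ⟨k, hk, h⟩]
  have hEM : edgeMS G = M := edgeMS_eq G M hMnodup hMmem
  refine ⟨D, ?_, ?_, ?_⟩
  · rw [hD, Multiset.card_map, hK, ← Finset.card_def, filter_card_aux hn]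
  · intro e he
    rw [hD, Multiset.mem_map] at he
    obtain ⟨k, hk, rfl⟩ := he
    rw [hKmem] at hk
    exact (hES _).2 (h2 k hk)
  · refine ⟨base ::ₘ K.map (fun k => ({s(k, a k), s(k, b k), s(a k, b k)} :
      Multiset (Sym2 (Fin n)))), ?_, ?_⟩
    · intro t ht
      rw [Multiset.mem_cons] at ht
      rcases ht with rfl | ht
      · refine ⟨v0, v1, v2, ?_, ?_, ?_, rfl⟩ <;> intro h <;>
          have := congrArg Fin.val h <;> simp [v0, v1, v2] at this
      · rw [Multiset.mem_map] at ht
        obtain ⟨k, hk, rfl⟩ := ht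
        rw [hKmem] at hk
        have hak := (h1 k hk).1; have hbk := (h1 k hk).2.1; have hab := (h1 k hk).2.2
        refine ⟨a k, k, b k, ?_, ?_, hab, ?_⟩
        · intro h; have := congrArg Fin.val h; omega
        · intro h; have := congrArg Fin.val h; omega
        · rw [Sym2.eq_swap (a := a k) (b := k)]
    · rw [Multiset.sum_cons, hEM, hM]
      rw [add_assoc]
      congr 1
      have : (fun k => ({s(k, a k), s(k, b k), s(a k, b k)} : Multiset (Sym2 (Fin n)))) =
          fun k => pair k + {s(a k, b k)} := by
        funext k
        rw [hpair]
        rfl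
      rw [this, Multiset.sum_map_add]
      have hbind : (K.map pair).sum = K.bind pair := rfl
      have hsing : (Multiset.map (fun k => ({s(a k, b k)} : Multiset (Sym2 (Fin n)))) K).sum
          = D := by
        rw [hD, show (fun k => ({s(a k, b k)} : Multiset (Sym2 (Fin n)))) =
            (fun e => ({e} : Multiset (Sym2 (Fin n)))) ∘ (fun k => s(a k, b k)) from rfl,
          ← Multiset.map_map, Multiset.sum_map_singleton]
      rw [hbind, hsing]

lemma mop_eps_le {n : ℕ} (G : SimpleGraph (Fin n)) (h : IsMOP G) : epsDelta G ≤ n - 3 := by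
  obtain ⟨hn, a, b, h1, h2, h3, rfl⟩ := h
  exact Nat.sInf_le (mop_mem hn a b h1 h2)

end UB

section Fan
variable (n : ℕ) (hn : 3 ≤ n)

def fa : Fin n → Fin n := fun _ => ⟨0, by omega⟩
def fb : Fin n → Fin n := fun k => ⟨(k : ℕ) - 1, Nat.lt_of_le_of_lt (Nat.sub_le _ _) k.isLt⟩

noncomputable def fan : SimpleGraph (Fin n) :=
  SimpleGraph.fromEdgeSet (mopEdges n hn (fa n hn) (fb n))

lemma fan_mem (x y : Fin n) :
    s(x, y) ∈ mopEdges n hn (fa n hn) (fb n) ↔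
      ((x : ℕ) = 0 ∧ 1 ≤ (y : ℕ)) ∨ ((y : ℕ) = 0 ∧ 1 ≤ (x : ℕ)) ∨
      (x : ℕ) + 1 = (y : ℕ) ∨ (y : ℕ) + 1 = (x : ℕ) := by
  simp only [mopEdges, Set.mem_setOf_eq, Sym2.eq_iff, Fin.ext_iff, fa, fb, Fin.val_mk]
  constructor
  · rintro (h | h | h | ⟨k, hk, h⟩) <;> omega
  · intro h
    rcases Nat.lt_or_ge (x : ℕ) 3 with hx3 | hx3 <;> rcases Nat.lt_or_ge (y : ℕ) 3 with hy3 | hy3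
    · have : (((x:ℕ) = 0 ∧ (y:ℕ) = 1) ∨ ((x:ℕ) = 1 ∧ (y:ℕ) = 0)) ∨
        (((x:ℕ) = 1 ∧ (y:ℕ) = 2) ∨ ((x:ℕ) = 2 ∧ (y:ℕ) = 1)) ∨
        (((x:ℕ) = 0 ∧ (y:ℕ) = 2) ∨ ((x:ℕ) = 2 ∧ (y:ℕ) = 0)) := by omega
      tauto
    · exact Or.inr (Or.inr (Or.inr ⟨y, by omega⟩))
    · exact Or.inr (Or.inr (Or.inr ⟨x, by omega⟩))
    · rcases h with h | h | h | h
      · omega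
      · exact Or.inr (Or.inr (Or.inr ⟨x, by omega⟩))
      · exact Or.inr (Or.inr (Or.inr ⟨y, by omega⟩))
      · exact Or.inr (Or.inr (Or.inr ⟨x, by omega⟩))

lemma fan_edgeSet (x y : Fin n) :
    s(x, y) ∈ (fan n hn).edgeSet ↔
      ((x : ℕ) = 0 ∧ 1 ≤ (y : ℕ)) ∨ ((y : ℕ) = 0 ∧ 1 ≤ (x : ℕ)) ∨
      (x : ℕ) + 1 = (y : ℕ) ∨ (y : ℕ) + 1 = (x : ℕ) := by
  rw [fan, SimpleGraph.edgeSet_fromEdgeSet, Set.mem_diff]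
  constructor
  · rintro ⟨h, -⟩; exact (fan_mem n hn x y).1 h
  · intro h
    refine ⟨(fan_mem n hn x y).2 h, ?_⟩
    simp only [Sym2.diagSet, Set.mem_setOf_eq, Sym2.mk_isDiag_iff]
    intro hxy
    have := congrArg Fin.val hxy
    omega


lemma fan_isMOP : IsMOP (fan n hn) := by
  refine ⟨hn, fa n hn, fb n, ?_, ?_, ?_, rfl⟩
  · intro k hk
    refine ⟨by simp [fa]; omega, by simp [fb]; omega, ?_⟩
    intro h
    have := congrArg Fin.val h
    simp [fa, fb] at this
    omega
  · intro k hk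
    rw [fan_mem]
    simp [fa, fb]
    omega
  · intro k l hk hl hkl h
    rw [Sym2.eq_iff] at h
    apply hkl
    have hk' : (fb n k : ℕ) = (k : ℕ) - 1 := rfl
    have hl' : (fb n l : ℕ) = (l : ℕ) - 1 := rfl
    have ha : (fa n hn k : ℕ) = 0 := rfl
    have hb : (fa n hn l : ℕ) = 0 := rfl
    rcases h with ⟨h1, h2⟩ | ⟨h1, h2⟩
    · have := congrArg Fin.val h2
      rw [hk', hl'] at this
      exact Fin.ext (by omega)
    · have := congrArg Fin.val h1
      rw [ha, hl'] at this
      omega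

def Pe (i : ℕ) : Sym2 (Fin n) :=
  s(⟨i % n, Nat.mod_lt _ (by omega)⟩, ⟨(i + 1) % n, Nat.mod_lt _ (by omega)⟩)

def Sp (i : ℕ) : Sym2 (Fin n) :=
  s(⟨0, by omega⟩, ⟨i % n, Nat.mod_lt _ (by omega)⟩)

def triM (i : ℕ) : Multiset (Sym2 (Fin n)) := {Pe n hn i, Sp n hn i, Sp n hn (i + 1)}

lemma pe_eq {i : ℕ} (h : i + 1 < n) {u v : Fin n} (hu : (u : ℕ) = i) (hv : (v : ℕ) = i + 1) :
    Pe n hn i = s(u, v) := by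
  unfold Pe
  refine Sym2.eq_iff.2 (Or.inl ⟨?_, ?_⟩) <;> apply Fin.ext <;>
    simp [Nat.mod_eq_of_lt (by omega : i < n), Nat.mod_eq_of_lt h, hu, hv]

lemma sp_eq {i : ℕ} (h : i < n) {u v : Fin n} (hu : (u : ℕ) = 0) (hv : (v : ℕ) = i) :
    Sp n hn i = s(u, v) := by
  unfold Sp
  refine Sym2.eq_iff.2 (Or.inl ⟨?_, ?_⟩) <;> apply Fin.ext <;>
    simp [Nat.mod_eq_of_lt h, hu, hv]

lemma pe_eq_pe {i j : ℕ} (hi : i + 1 < n) (hj : j + 1 < n) :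
    Pe n hn i = Pe n hn j ↔ i = j := by
  unfold Pe
  rw [Sym2.eq_iff]
  simp only [Fin.ext_iff, Nat.mod_eq_of_lt (by omega : i < n), Nat.mod_eq_of_lt hi,
    Nat.mod_eq_of_lt (by omega : j < n), Nat.mod_eq_of_lt hj]
  omega

lemma pe_ne_sp {i j : ℕ} (hi1 : 1 ≤ i) (hi : i + 1 < n) (hj : j < n) :
    Pe n hn i ≠ Sp n hn j := by
  unfold Pe Sp
  intro h
  rw [Sym2.eq_iff] at h
  simp only [Fin.ext_iff, Nat.mod_eq_of_lt (by omega : i < n), Nat.mod_eq_of_lt hi,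
    Nat.mod_eq_of_lt hj] at h
  omega

lemma sp_eq_sp {i j : ℕ} (hi : i < n) (hj : j < n) :
    Sp n hn i = Sp n hn j ↔ i = j := by
  unfold Sp
  rw [Sym2.eq_iff]
  simp only [Fin.ext_iff, Nat.mod_eq_of_lt hi, Nat.mod_eq_of_lt hj]
  constructor
  · rintro (⟨-, h⟩ | ⟨h1, h2⟩) <;> omega
  · intro h; exact Or.inl ⟨trivial, h⟩

lemma count_pe_tri {i j : ℕ} (hi1 : 1 ≤ i) (hi : i + 1 < n) (hj1 : 1 ≤ j) (hj : j + 1 < n) :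
    (triM n hn j).count (Pe n hn i) = if i = j then 1 else 0 := by
  unfold triM
  rw [Multiset.insert_eq_cons, Multiset.insert_eq_cons, Multiset.count_cons,
    Multiset.count_cons, Multiset.count_singleton]
  rw [if_neg (pe_ne_sp n hn hi1 hi (by omega)), if_neg (pe_ne_sp n hn hi1 hi (by omega))]
  simp only [pe_eq_pe n hn hi hj]
  simp [add_comm]
lemma count_sp_tri {i j : ℕ} (hi : i < n) (hj1 : 1 ≤ j) (hj : j + 1 < n) :
    (triM n hn j).count (Sp n hn i) =
      (if i = j then 1 else 0) + (if i = j + 1 then 1 else 0) := by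
  unfold triM
  rw [Multiset.insert_eq_cons, Multiset.insert_eq_cons, Multiset.count_cons,
    Multiset.count_cons, Multiset.count_singleton]
  rw [if_neg (Ne.symm (pe_ne_sp n hn hj1 hj hi))]
  simp only [sp_eq_sp n hn hi (by omega : j < n), sp_eq_sp n hn hi (by omega : j + 1 < n)]
  omega

lemma tri_inj {i j : ℕ} (hi1 : 1 ≤ i) (hi : i + 1 < n) (hj1 : 1 ≤ j) (hj : j + 1 < n)
    (h : triM n hn i = triM n hn j) : i = j := by
  have h1 := congrArg (Multiset.count (Pe n hn i)) h
  rw [count_pe_tri n hn hi1 hi hi1 hi, count_pe_tri n hn hi1 hi hj1 hj] at h1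
  simp at h1
  by_contra hne
  omega

lemma tri_isTriangle {i : ℕ} (hi1 : 1 ≤ i) (hi : i + 1 < n) : IsTriangle (triM n hn i) := by
  refine ⟨⟨i, by omega⟩, ⟨i + 1, hi⟩, ⟨0, by omega⟩, ?_, ?_, ?_, ?_⟩
  · intro h; have := congrArg Fin.val h; simp only [Fin.val_mk] at this; omega
  · intro h; have := congrArg Fin.val h; simp only [Fin.val_mk] at this; omega
  · intro h; have := congrArg Fin.val h; simp only [Fin.val_mk] at this; omega
  · unfold triM
    rw [pe_eq n hn hi (u := ⟨i, by omega⟩) (v := ⟨i + 1, hi⟩) rfl rfl]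
    rw [sp_eq n hn (by omega : i < n) (u := ⟨0, by omega⟩) (v := ⟨i, by omega⟩) rfl rfl]
    rw [sp_eq n hn hi (u := ⟨0, by omega⟩) (v := ⟨i + 1, hi⟩) rfl rfl]
    rw [Sym2.eq_swap (a := (⟨0, by omega⟩ : Fin n)) (b := (⟨i, by omega⟩ : Fin n))]
    rw [Sym2.eq_swap (a := (⟨0, by omega⟩ : Fin n)) (b := (⟨i + 1, hi⟩ : Fin n))]
    exact msw2 _ _ _

lemma fan_tri_classify (t : Multiset (Sym2 (Fin n))) (ht : IsTriangle t)
    (he : ∀ e ∈ t, e ∈ (fan n hn).edgeSet) :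
    ∃ i : ℕ, 1 ≤ i ∧ i + 1 < n ∧ t = triM n hn i := by
  obtain ⟨x, y, z, hxy, hyz, hxz, rfl⟩ := ht
  have cxy := (fan_edgeSet n hn x y).1 (he _ (by simp))
  have cyz := (fan_edgeSet n hn y z).1 (he _ (by simp))
  have cxz := (fan_edgeSet n hn x z).1 (he _ (by simp))
  have hxy' : (x : ℕ) ≠ (y : ℕ) := fun h => hxy (Fin.ext h)
  have hyz' : (y : ℕ) ≠ (z : ℕ) := fun h => hyz (Fin.ext h)
  have hxz' : (x : ℕ) ≠ (z : ℕ) := fun h => hxz (Fin.ext h)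
  have hx := x.isLt; have hy := y.isLt; have hz := z.isLt
  have key : ((x : ℕ) = 0 ∧ ((y : ℕ) + 1 = z ∨ (z : ℕ) + 1 = y)) ∨
      ((y : ℕ) = 0 ∧ ((x : ℕ) + 1 = z ∨ (z : ℕ) + 1 = x)) ∨
      ((z : ℕ) = 0 ∧ ((x : ℕ) + 1 = y ∨ (y : ℕ) + 1 = x)) := by omega
  rcases key with ⟨h0, hc | hc⟩ | ⟨h0, hc | hc⟩ | ⟨h0, hc | hc⟩
  · -- x = 0, y + 1 = z
    refine ⟨(y : ℕ), by omega, by omega, ?_⟩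
    unfold triM
    rw [pe_eq n hn (by omega) (u := y) (v := z) rfl (by omega),
      sp_eq n hn (by omega) (u := x) (v := y) h0 rfl,
      sp_eq n hn (by omega) (u := x) (v := z) h0 (by omega)]
    exact msw1 _ _ _
  · -- x = 0, z + 1 = y
    refine ⟨(z : ℕ), by omega, by omega, ?_⟩
    unfold triM
    rw [pe_eq n hn (by omega) (u := z) (v := y) rfl (by omega),
      sp_eq n hn (by omega) (u := x) (v := z) h0 rfl,
      sp_eq n hn (by omega) (u := x) (v := y) h0 (by omega),
      Sym2.eq_swap (a := z) (b := y)]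
    exact msrot _ _ _
  · -- y = 0, x + 1 = z
    refine ⟨(x : ℕ), by omega, by omega, ?_⟩
    unfold triM
    rw [pe_eq n hn (by omega) (u := x) (v := z) rfl (by omega),
      sp_eq n hn (by omega) (u := y) (v := x) h0 rfl,
      sp_eq n hn (by omega) (u := y) (v := z) h0 (by omega),
      Sym2.eq_swap (a := y) (b := x)]
    exact msrot2 _ _ _
  · -- y = 0, z + 1 = x
    refine ⟨(z : ℕ), by omega, by omega, ?_⟩
    unfold triM
    rw [pe_eq n hn (by omega) (u := z) (v := x) rfl (by omega),
      sp_eq n hn (by omega) (u := y) (v := z) h0 rfl,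
      sp_eq n hn (by omega) (u := y) (v := x) h0 (by omega),
      Sym2.eq_swap (a := z) (b := x), Sym2.eq_swap (a := y) (b := z),
      Sym2.eq_swap (a := y) (b := x)]
    exact msrev _ _ _
  · -- z = 0, x + 1 = y
    refine ⟨(x : ℕ), by omega, by omega, ?_⟩
    unfold triM
    rw [pe_eq n hn (by omega) (u := x) (v := y) rfl (by omega),
      sp_eq n hn (by omega) (u := z) (v := x) h0 rfl,
      sp_eq n hn (by omega) (u := z) (v := y) h0 (by omega),
      Sym2.eq_swap (a := z) (b := x), Sym2.eq_swap (a := z) (b := y)]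
    exact msw2 _ _ _
  · -- z = 0, y + 1 = x
    refine ⟨(y : ℕ), by omega, by omega, ?_⟩
    unfold triM
    rw [pe_eq n hn (by omega) (u := y) (v := x) rfl (by omega),
      sp_eq n hn (by omega) (u := z) (v := y) h0 rfl,
      sp_eq n hn (by omega) (u := z) (v := x) h0 (by omega),
      Sym2.eq_swap (a := y) (b := x), Sym2.eq_swap (a := z) (b := y),
      Sym2.eq_swap (a := z) (b := x)]

lemma fan_eps_ge : n - 3 ≤ epsDelta (fan n hn) := by
  classical
  obtain ⟨hn', a, b, h1, h2, h3, hEq⟩ := fan_isMOP n hn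
  have hne : (n - 3) ∈ {k | ∃ D : Multiset (Sym2 (Fin n)), Multiset.card D = k ∧
      (∀ e ∈ D, e ∈ (fan n hn).edgeSet) ∧ TriDecomp (edgeMS (fan n hn) + D)} := by
    rw [hEq]
    exact mop_mem hn' a b h1 h2
  refine le_csInf ⟨_, hne⟩ ?_
  rintro k ⟨D, hcard, hD, T, hT, hsum⟩
  have hTmem : ∀ t ∈ T, ∃ i : ℕ, 1 ≤ i ∧ i + 1 < n ∧ t = triM n hn i := by
    intro t htT
    refine fan_tri_classify n hn t (hT t htT) ?_
    intro e het
    have hM : e ∈ edgeMS (fan n hn) + D := by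
      refine Multiset.mem_of_le ?_ het
      rw [← hsum]
      exact Multiset.le_sum_of_mem htT
    rcases Multiset.mem_add.1 hM with h | h
    · exact (mem_edgeMS _ _).1 h
    · exact hD e h
  have hPmem : ∀ j : ℕ, 1 ≤ j → j + 1 < n → Pe n hn j ∈ (fan n hn).edgeSet := by
    intro j hj1 hj
    unfold Pe
    rw [fan_edgeSet]
    simp only [Fin.val_mk, Nat.mod_eq_of_lt (by omega : j < n), Nat.mod_eq_of_lt hj]
    tauto
  have hSmem : ∀ i : ℕ, 1 ≤ i → i < n → Sp n hn i ∈ (fan n hn).edgeSet := by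
    intro i hi1 hi
    unfold Sp
    rw [fan_edgeSet]
    simp only [Fin.val_mk, Nat.mod_eq_of_lt hi]
    tauto
  have hcountP : ∀ j : ℕ, 1 ≤ j → j + 1 < n →
      (edgeMS (fan n hn) + D).count (Pe n hn j) = T.count (triM n hn j) := by
    intro j hj1 hj
    rw [← hsum, count_in_sum, count_eq_sum_map T (triM n hn j)]
    congr 1
    apply Multiset.map_congr rfl
    intro t htT
    obtain ⟨i, hi1, hi, rfl⟩ := hTmem t htT
    rw [count_pe_tri n hn hj1 hj hi1 hi]
    by_cases hij : j = i
    · subst hij; simp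
    · rw [if_neg hij, if_neg (fun hh => hij (tri_inj n hn hi1 hi hj1 hj hh).symm)]
  have hcountP1 : ∀ j : ℕ, 1 ≤ j → j + 1 < n →
      1 ≤ (edgeMS (fan n hn) + D).count (Pe n hn j) := by
    intro j hj1 hj
    exact Multiset.one_le_count_iff_mem.2
      (Multiset.mem_add.2 (Or.inl ((mem_edgeMS _ _).2 (hPmem j hj1 hj))))
  have hcountS : ∀ i : ℕ, 2 ≤ i → i + 1 < n →
      2 ≤ (edgeMS (fan n hn) + D).count (Sp n hn i) := by
    intro i hi2 hi
    have e1 : (edgeMS (fan n hn) + D).count (Sp n hn i) =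
        (T.map (fun t => t.count (Sp n hn i))).sum := by
      rw [← hsum, count_in_sum]
    have e2 : (T.map (fun t => (if t = triM n hn (i - 1) then 1 else 0) +
        (if t = triM n hn i then 1 else 0))).sum ≤
        (T.map (fun t => t.count (Sp n hn i))).sum := by
      apply Multiset.sum_map_le_sum_map
      intro t htT
      obtain ⟨j, hj1, hj, rfl⟩ := hTmem t htT
      rw [count_sp_tri n hn (by omega : i < n) hj1 hj]
      have d1 : (triM n hn j = triM n hn (i - 1)) ↔ j = i - 1 :=
        ⟨fun h => tri_inj n hn hj1 hj (by omega) (by omega) h, fun h => by rw [h]⟩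
      have d2 : (triM n hn j = triM n hn i) ↔ j = i :=
        ⟨fun h => tri_inj n hn hj1 hj (by omega) (by omega) h, fun h => by rw [h]⟩
      simp only [d1, d2]
      split_ifs <;> omega
    rw [Multiset.sum_map_add] at e2
    rw [← count_eq_sum_map T (triM n hn (i - 1)), ← count_eq_sum_map T (triM n hn i)] at e2
    rw [← hcountP (i - 1) (by omega) (by omega), ← hcountP i (by omega) (by omega)] at e2
    have g1 := hcountP1 (i - 1) (by omega) (by omega)
    have g2 := hcountP1 i (by omega) (by omega)
    omega
  have hDcount : ∀ i : ℕ, 2 ≤ i → i + 1 < n → 1 ≤ D.count (Sp n hn i) := by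
    intro i hi2 hi
    have hme : (edgeMS (fan n hn) + D).count (Sp n hn i) = 1 + D.count (Sp n hn i) := by
      rw [Multiset.count_add, count_edgeMS _ _ (hSmem i (by omega) (by omega))]
    have := hcountS i hi2 hi
    omega
  have hinj : ∀ i ∈ Finset.Ico 2 (n - 1), ∀ j ∈ Finset.Ico 2 (n - 1),
      Sp n hn i = Sp n hn j → i = j := by
    intro i hi j hj h
    rw [Finset.mem_Ico] at hi hj
    exact (sp_eq_sp n hn (by omega) (by omega)).1 h
  calc n - 3 = ∑ _i ∈ Finset.Ico 2 (n - 1), 1 := by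
        rw [Finset.sum_const, Nat.card_Ico, smul_eq_mul, mul_one]
        omega
    _ ≤ ∑ i ∈ Finset.Ico 2 (n - 1), D.count (Sp n hn i) := by
        refine Finset.sum_le_sum fun i hi => ?_
        rw [Finset.mem_Ico] at hi
        exact hDcount i hi.1 (by omega)
    _ = ∑ e ∈ (Finset.Ico 2 (n - 1)).image (Sp n hn), D.count e :=
        (Finset.sum_image (f := fun e => D.count e) hinj).symm
    _ ≤ Multiset.card D := sum_count_le_card _ _
    _ = k := hcard

end Fan

/-- For every `n ≥ 3`, `Ξ_Δ(OP_n) = n - 3`. -/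
theorem xi_OP_eq (n : ℕ) (hn : 3 ≤ n) : xiOP n = n - 3 := by
  have hub : ∀ m ∈ {m | ∃ G : SimpleGraph (Fin n), IsMOP G ∧ epsDelta G = m}, m ≤ n - 3 := by
    rintro m ⟨G, hG, rfl⟩
    exact mop_eps_le G hG
  have hmem : (n - 3) ∈ {m | ∃ G : SimpleGraph (Fin n), IsMOP G ∧ epsDelta G = m} := by
    refine ⟨fan n hn, fan_isMOP n hn, le_antisymm (mop_eps_le _ (fan_isMOP n hn)) (fan_eps_ge n hn)⟩
  exact le_antisymm (csSup_le ⟨_, hmem⟩ hub) (le_csSup ⟨n - 3, hub⟩ hmem)
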